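/- arXiv:1406.1805 — 5 statements merged into one kernel-verified Lean document; each statement's English description precedes it below -/
import Mathlib

section
/- Let ν be a probability measure on a finite set S, μ another probability measure on S with density f with respect to ν, and m a median of f with respect to ν. Then ∫|f - m| dν ≤ ‖μ - ν‖_tv ≤ 2∫|f - m| dν, where ‖μ - ν‖_tv = ∑_{x∈S} |μ(x) - ν(x)|. -/
/-- For probability measures μ, ν on a finite set S with ν charging all points,
f the density of μ with respect to ν, and m a median of f with respect to ν,
∫|f - m| dν ≤ ‖μ - ν‖_tv ≤ 2 ∫|f - m| dν. -/
theorem tv_median_bounds {S : Type*} [Fintype S]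
    (ν : S → ℝ) (hν0 : ∀ x, 0 < ν x) (hν1 : ∑ x, ν x = 1)
    (μ : S → ℝ) (hμ0 : ∀ x, 0 ≤ μ x) (hμ1 : ∑ x, μ x = 1)
    (f : S → ℝ) (hf : ∀ x, μ x = f x * ν x) (m : ℝ)
    (hm1 : (1 : ℝ) / 2 ≤ ∑ x ∈ Finset.univ.filter (fun x => f x ≤ m), ν x)
    (hm2 : (1 : ℝ) / 2 ≤ ∑ x ∈ Finset.univ.filter (fun x => m ≤ f x), ν x) :
    (∑ x, |f x - m| * ν x) ≤ (∑ x, |μ x - ν x|) ∧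
      (∑ x, |μ x - ν x|) ≤ 2 * ∑ x, |f x - m| * ν x := by
  classical
  have hsum : ∀ x, |μ x - ν x| = |f x - 1| * ν x := by
    intro x
    rw [hf x, show f x * ν x - ν x = (f x - 1) * ν x by ring, abs_mul,
      abs_of_pos (hν0 x)]
  have hT : (∑ x, |μ x - ν x|) = ∑ x, |f x - 1| * ν x := by
    simp only [hsum]
  have hfν : ∑ x, f x * ν x = 1 := by
    rw [← hμ1]; exact Finset.sum_congr rfl fun x _ => (hf x).symm
  set M := ∑ x, |f x - m| * ν x with hM
  set T := ∑ x, |f x - 1| * ν x with hTdef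
  -- |m - 1| ≤ M
  have hm1M : |m - 1| ≤ M := by
    have h1 : m - 1 = ∑ x, (m - f x) * ν x := by
      have : ∑ x, (m - f x) * ν x = m * (∑ x, ν x) - ∑ x, f x * ν x := by
        rw [Finset.mul_sum, ← Finset.sum_sub_distrib]
        exact Finset.sum_congr rfl fun x _ => by ring
      rw [this, hν1, hfν]; ring
    calc |m - 1| = |∑ x, (m - f x) * ν x| := by rw [h1]
      _ ≤ ∑ x, |(m - f x) * ν x| := Finset.abs_sum_le_sum_abs _ _
      _ = M := Finset.sum_congr rfl fun x _ => by
          rw [abs_mul, abs_of_pos (hν0 x), abs_sub_comm]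
  -- T ≤ M + |m - 1|
  have hTM : T ≤ M + |m - 1| := by
    have : T ≤ ∑ x, (|f x - m| + |m - 1|) * ν x := by
      refine Finset.sum_le_sum fun x _ => ?_
      have := abs_sub_le (f x) m 1
      nlinarith [(hν0 x).le]
    calc T ≤ ∑ x, (|f x - m| + |m - 1|) * ν x := this
      _ = M + |m - 1| * ∑ x, ν x := by
          rw [Finset.mul_sum, ← Finset.sum_add_distrib]
          exact Finset.sum_congr rfl fun x _ => by ring
      _ = M + |m - 1| := by rw [hν1, mul_one]
  -- key lower bound: M ≤ T
  have key : M ≤ T := by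
    rcases le_total m 1 with hm | hm
    · set A := ∑ x ∈ Finset.univ.filter (fun x => f x ≤ m), ν x with hAdef
      have hsplit := Finset.sum_filter_add_sum_filter_not Finset.univ
        (fun x => f x ≤ m) ν
      rw [hν1] at hsplit
      have hb : ∀ x ∈ Finset.univ,
          |f x - m| * ν x - |f x - 1| * ν x
            ≤ (if f x ≤ m then (m - 1) else (1 - m)) * ν x := by
        intro x _
        by_cases h : f x ≤ m
        · rw [if_pos h]
          have h1 : f x ≤ 1 := le_trans h hm
          rw [abs_of_nonpos (by linarith), abs_of_nonpos (by linarith)]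
          nlinarith [(hν0 x).le]
        · rw [if_neg h]
          push_neg at h
          rw [abs_of_pos (by linarith)]
          have h2 : f x - 1 ≤ |f x - 1| := le_abs_self _
          nlinarith [(hν0 x).le]
      have hsum2 : ∑ x, ((if f x ≤ m then (m - 1) else (1 - m)) * ν x)
          = (m - 1) * A + (1 - m) * (∑ x ∈ Finset.univ.filter (fun x => ¬ f x ≤ m), ν x) := by
        rw [← Finset.sum_filter_add_sum_filter_not Finset.univ (fun x => f x ≤ m)
          (fun x => (if f x ≤ m then (m - 1) else (1 - m)) * ν x)]
        congr 1
        · rw [Finset.mul_sum]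
          refine Finset.sum_congr rfl fun x hx => ?_
          rw [Finset.mem_filter] at hx
          rw [if_pos hx.2]
        · rw [Finset.mul_sum]
          refine Finset.sum_congr rfl fun x hx => ?_
          rw [Finset.mem_filter] at hx
          rw [if_neg hx.2]
      have := Finset.sum_le_sum hb
      rw [Finset.sum_sub_distrib, hsum2] at this
      nlinarith
    · set A := ∑ x ∈ Finset.univ.filter (fun x => m ≤ f x), ν x with hAdef
      have hsplit := Finset.sum_filter_add_sum_filter_not Finset.univ
        (fun x => m ≤ f x) ν
      rw [hν1] at hsplit
      have hb : ∀ x ∈ Finset.univ,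
          |f x - m| * ν x - |f x - 1| * ν x
            ≤ (if m ≤ f x then (1 - m) else (m - 1)) * ν x := by
        intro x _
        by_cases h : m ≤ f x
        · rw [if_pos h]
          have h1 : 1 ≤ f x := le_trans hm h
          rw [abs_of_nonneg (by linarith), abs_of_nonneg (by linarith)]
          nlinarith [(hν0 x).le]
        · rw [if_neg h]
          push_neg at h
          rw [abs_of_neg (by linarith)]
          have h2 : -(f x - 1) ≤ |f x - 1| := neg_le_abs _
          nlinarith [(hν0 x).le]
      have hsum2 : ∑ x, ((if m ≤ f x then (1 - m) else (m - 1)) * ν x)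
          = (1 - m) * A + (m - 1) * (∑ x ∈ Finset.univ.filter (fun x => ¬ m ≤ f x), ν x) := by
        rw [← Finset.sum_filter_add_sum_filter_not Finset.univ (fun x => m ≤ f x)
          (fun x => (if m ≤ f x then (1 - m) else (m - 1)) * ν x)]
        congr 1
        · rw [Finset.mul_sum]
          refine Finset.sum_congr rfl fun x hx => ?_
          rw [Finset.mem_filter] at hx
          rw [if_pos hx.2]
        · rw [Finset.mul_sum]
          refine Finset.sum_congr rfl fun x hx => ?_
          rw [Finset.mem_filter] at hx
          rw [if_neg hx.2]
      have := Finset.sum_le_sum hb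
      rw [Finset.sum_sub_distrib, hsum2] at this
      nlinarith
  refine ⟨?_, ?_⟩
  · rw [hT]; exact key
  · rw [hT]; linarith
end

section
/- Let S be a finite set, ν̃ a probability measure on S charging all points, ψ : S → (0,∞), and f̃ : S → ℝ a probability density with respect to ν̃ (ν̃[f̃]=1). Let ν := (ψ/ν̃[ψ])·ν̃, μ̃ := f̃·ν̃ and μ := (ψ/μ̃[ψ])·μ̃ with density f with respect to ν. Then the ν-variance inequality Var_ν(f) ≤ (ψ_∨/ψ_∧)² Var_{ν̃}(f̃) holds, where Var denotes variance of the density with respect to the indicated measure. -/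
/-- Variance comparison under ψ-tilting: if f̃ is a probability density w.r.t. ν̃,
ν is the ψ-tilt of ν̃ and f is the density (w.r.t. ν) of the ψ-tilt of μ̃ = f̃·ν̃,
then Var_ν(f) ≤ (ψ_∨/ψ_∧)² Var_{ν̃}(f̃). -/
theorem variance_tilting_comparison {S : Type*} [Fintype S] [Nonempty S]
    (νt : S → ℝ) (hνt0 : ∀ x, 0 < νt x) (hνt1 : ∑ x, νt x = 1)
    (ψ : S → ℝ) (hψ : ∀ x, 0 < ψ x)
    (ft : S → ℝ) (hft0 : ∀ x, 0 ≤ ft x) (hft1 : ∑ x, ft x * νt x = 1)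
    (ν : S → ℝ) (hν : ∀ x, ν x = ψ x * νt x / (∑ y, ψ y * νt y))
    (f : S → ℝ)
    (hf : ∀ x, f x = (∑ y, ψ y * νt y) / (∑ y, ψ y * ft y * νt y) * ft x) :
    (∑ x, (f x - ∑ y, f y * ν y) ^ 2 * ν x) ≤
      ((⨆ x, ψ x) / (⨅ x, ψ x)) ^ 2 * ∑ x, (ft x - ∑ y, ft y * νt y) ^ 2 * νt x := by
  set Z := ∑ y, ψ y * νt y with hZdef
  set W := ∑ y, ψ y * ft y * νt y with hWdef
  set M := ⨆ x, ψ x with hMdef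
  set m := ⨅ x, ψ x with hmdef
  have hZ : 0 < Z := Finset.sum_pos (fun x _ => mul_pos (hψ x) (hνt0 x))
    Finset.univ_nonempty
  have hW : 0 < W := by
    obtain ⟨x, -, hx⟩ : ∃ x ∈ Finset.univ, 0 < ft x * νt x := by
      by_contra h
      push_neg at h
      have : ∑ x, ft x * νt x ≤ 0 :=
        Finset.sum_nonpos (fun x _ => h x (Finset.mem_univ x))
      linarith [hft1]
    refine Finset.sum_pos' (fun x _ =>
      mul_nonneg (mul_nonneg (hψ x).le (hft0 x)) (hνt0 x).le) ⟨x, Finset.mem_univ x, ?_⟩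
    have := mul_pos (hψ x) hx
    nlinarith
  have hM : ∀ x, ψ x ≤ M := fun x => le_ciSup (Set.Finite.bddAbove (Set.finite_range ψ)) x
  have hmle : ∀ x, m ≤ ψ x := fun x => ciInf_le (Set.Finite.bddBelow (Set.finite_range ψ)) x
  have hm0 : 0 < m := by
    obtain ⟨x0, hx0⟩ := Finite.exists_min ψ
    have : ψ x0 ≤ m := le_ciInf hx0
    linarith [hψ x0]
  have hM0 : 0 < M := lt_of_lt_of_le hm0 (le_trans (hmle (Classical.arbitrary S)) (hM _))
  have hZM : Z ≤ M := by
    calc Z ≤ ∑ y, M * νt y :=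
          Finset.sum_le_sum (fun y _ => mul_le_mul_of_nonneg_right (hM y) (hνt0 y).le)
      _ = M := by rw [← Finset.mul_sum, hνt1, mul_one]
  have hWm : m ≤ W := by
    calc m = ∑ y, m * (ft y * νt y) := by rw [← Finset.mul_sum, hft1, mul_one]
      _ ≤ W := by
          refine Finset.sum_le_sum (fun y _ => ?_)
          have : m * (ft y * νt y) ≤ ψ y * (ft y * νt y) :=
            mul_le_mul_of_nonneg_right (hmle y) (mul_nonneg (hft0 y) (hνt0 y).le)
          nlinarith
  have hsumν : ∑ x, ν x = 1 := by
    simp only [hν]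
    rw [← Finset.sum_div, ← hZdef, div_self hZ.ne']
  have hsumfν : ∑ x, f x * ν x = 1 := by
    have h : ∀ x ∈ Finset.univ, f x * ν x = (ψ x * ft x * νt x) / W := by
      intro x _
      rw [hf x, hν x]
      field_simp
    rw [Finset.sum_congr rfl h, ← Finset.sum_div, ← hWdef, div_self hW.ne']
  rw [hsumfν, hft1]
  have expand : ∑ x, (f x - Z / W) ^ 2 * ν x
      = ∑ x, (f x - 1) ^ 2 * ν x + (Z / W - 1) ^ 2 := by
    have h : ∀ x ∈ Finset.univ, (f x - Z / W) ^ 2 * ν x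
        = (f x - 1) ^ 2 * ν x + (2 - 2 * (Z / W)) * (f x * ν x)
          + ((Z / W) ^ 2 - 1) * ν x := fun x _ => by ring
    have e1 : ∑ x, (2 - 2 * (Z / W)) * (f x * ν x) = 2 - 2 * (Z / W) := by
      rw [← Finset.mul_sum, hsumfν, mul_one]
    have e2 : ∑ x, ((Z / W) ^ 2 - 1) * ν x = (Z / W) ^ 2 - 1 := by
      rw [← Finset.mul_sum, hsumν, mul_one]
    rw [Finset.sum_congr rfl h, Finset.sum_add_distrib, Finset.sum_add_distrib, e1, e2]
    ring
  have step1 : ∑ x, (f x - 1) ^ 2 * ν x ≤ ∑ x, (f x - Z / W) ^ 2 * ν x := by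
    nlinarith [sq_nonneg (Z / W - 1)]
  have step2 : ∑ x, (f x - Z / W) ^ 2 * ν x
      ≤ ∑ x, (M / m) ^ 2 * ((ft x - 1) ^ 2 * νt x) := by
    refine Finset.sum_le_sum (fun x _ => ?_)
    rw [hf x, hν x]
    have e : (Z / W * ft x - Z / W) ^ 2 * (ψ x * νt x / Z)
        = (Z * ψ x / W ^ 2) * ((ft x - 1) ^ 2 * νt x) := by
      field_simp
    rw [e]
    have h1 : Z * ψ x / W ^ 2 ≤ (M / m) ^ 2 := by
      rw [div_pow]
      have hnum : Z * ψ x ≤ M ^ 2 := by nlinarith [hM x, (hψ x).le, hZM, hM0]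
      have hden : m ^ 2 ≤ W ^ 2 := by nlinarith
      exact div_le_div₀ (by positivity) hnum (by positivity) hden
    exact mul_le_mul_of_nonneg_right h1 (mul_nonneg (sq_nonneg _) (hνt0 x).le)
  calc ∑ x, (f x - 1) ^ 2 * ν x ≤ ∑ x, (M / m) ^ 2 * ((ft x - 1) ^ 2 * νt x) :=
        le_trans step1 step2
    _ = (M / m) ^ 2 * ∑ x, (ft x - 1) ^ 2 * νt x := by rw [← Finset.mul_sum]
end

section
/- Let r > 1. For all sufficiently large N there exists ρ₁ > 0 with 1/r² ≤ ρ₁² ≤ 1/r² + r^{-(N+1)} such that ρ₁^{2(N+1)} - ρ₁^{2N} + r^{1-N}ρ₁² - r^{-N-1} = 0. -/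
open Filter Real Set

/-- For r > 1 and all sufficiently large N, there exists ρ₁ > 0 with
1/r² ≤ ρ₁² ≤ 1/r² + r^{-(N+1)} such that
ρ₁^{2(N+1)} - ρ₁^{2N} + r^{1-N}ρ₁² - r^{-N-1} = 0. -/
theorem root_near_inv_r (r : ℝ) (hr : 1 < r) :
    ∃ N₀ : ℕ, ∀ N : ℕ, N₀ ≤ N →
      ∃ ρ : ℝ, 0 < ρ ∧ 1 / r ^ 2 ≤ ρ ^ 2 ∧ ρ ^ 2 ≤ 1 / r ^ 2 + r ^ (-(N : ℤ) - 1) ∧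
        ρ ^ (2 * (N + 1)) - ρ ^ (2 * N) + r ^ ((1 : ℤ) - N) * ρ ^ 2
          - r ^ (-(N : ℤ) - 1) = 0 := by
  have hr0 : (0:ℝ) < r := lt_trans one_pos hr
  have hrne : r ≠ 0 := hr0.ne'
  have hinv1 : r⁻¹ < 1 := inv_lt_one_of_one_lt₀ hr
  have hinv0 : (0:ℝ) ≤ r⁻¹ := (inv_pos.mpr hr0).le
  have ha_pos : (0:ℝ) < 1 / r ^ 2 := by positivity
  have ha_lt1 : 1 / r ^ 2 < 1 := by
    rw [div_lt_one (by positivity)]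
    exact one_lt_pow₀ hr (by norm_num)
  -- limit 1 : N * r^(1-N) → 0
  have h1 : Tendsto (fun N : ℕ => (N:ℝ) * r ^ ((1:ℤ) - N)) atTop (nhds 0) := by
    have := (tendsto_self_mul_const_pow_of_lt_one hinv0 hinv1).const_mul r
    rw [mul_zero] at this
    refine this.congr fun N => ?_
    rw [zpow_sub₀ hrne, zpow_one, zpow_natCast]
    field_simp
    ring_nf; rw [mul_assoc, ← mul_pow, mul_inv_cancel₀ hrne, one_pow, mul_one]
  -- limit 2 : r^(-N-1) → 0
  have h2 : Tendsto (fun N : ℕ => r ^ (-(N:ℤ) - 1)) atTop (nhds 0) := by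
    have := (tendsto_pow_atTop_nhds_zero_of_lt_one hinv0 hinv1).const_mul r⁻¹
    rw [mul_zero] at this
    refine this.congr fun N => ?_
    rw [zpow_sub₀ hrne, zpow_neg, zpow_one, zpow_natCast]
    field_simp
    ring_nf; rw [← mul_pow, mul_inv_cancel₀ hrne, one_pow]
  have hev1 : ∀ᶠ N : ℕ in atTop, (N:ℝ) * r ^ ((1:ℤ) - N) ≤ 1 / r ^ 2 :=
    h1.eventually (eventually_le_nhds ha_pos)
  have hev2 : ∀ᶠ N : ℕ in atTop, r ^ (-(N:ℤ) - 1) ≤ 1 - 1 / r ^ 2 :=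
    h2.eventually (eventually_le_nhds (by linarith))
  obtain ⟨N₀, hN₀⟩ := eventually_atTop.mp ((hev1.and hev2).and (eventually_ge_atTop 1))
  refine ⟨N₀, fun N hN => ?_⟩
  obtain ⟨⟨hNx, hb1⟩, hN1⟩ := hN₀ N hN
  -- notation
  set a : ℝ := 1 / r ^ 2 with ha_def
  set x : ℝ := r ^ ((1:ℤ) - N) with hx_def
  set ε : ℝ := r ^ (-(N:ℤ) - 1) with hε_def
  have hx_pos : 0 < x := zpow_pos hr0 _
  have hε_pos : 0 < ε := zpow_pos hr0 _
  set b : ℝ := a + ε with hb_def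
  have hab : a ≤ b := le_add_of_nonneg_right hε_pos.le
  have hb_pos : 0 < b := lt_of_lt_of_le ha_pos hab
  -- key zpow identities
  have ha_z : a = r ^ (-2 : ℤ) := by
    rw [ha_def, zpow_neg, ← zpow_natCast]
    norm_num
  have hax : a * x = ε := by
    rw [ha_z, hx_def, hε_def, ← zpow_add₀ hrne]
    congr 1; ring
  have hxε : x * ε = a ^ N := by
    rw [ha_z, hx_def, hε_def, ← zpow_add₀ hrne, ← zpow_natCast (r ^ (-2:ℤ)), ← zpow_mul]
    congr 1; ring
  have hb_fact : b = a * (1 + x) := by rw [hb_def, mul_add, mul_one, hax]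
  -- x ≤ 1 (needs N ≥ 1)
  have hx_le1 : x ≤ 1 := by
    rw [hx_def]
    calc r ^ ((1:ℤ) - N) ≤ r ^ (0:ℤ) := by
          apply zpow_le_zpow_right₀ hr.le
          omega
      _ = 1 := zpow_zero r
  have hNx_lt1 : (N:ℝ) * x < 1 := lt_of_le_of_lt hNx ha_lt1
  -- the polynomial
  set Q : ℝ → ℝ := fun u => u ^ (N + 1) - u ^ N + x * u - ε with hQ_def
  have hQa : Q a ≤ 0 := by
    have : Q a = a ^ N * (a - 1) := by
      simp only [hQ_def]
      rw [mul_comm x a, hax]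
      ring
    rw [this]
    apply mul_nonpos_of_nonneg_of_nonpos (by positivity)
    linarith
  have hQb : 0 ≤ Q b := by
    have hQb_eq : Q b = a ^ N * ((1 + x) ^ N * (b - 1) + 1) := by
      simp only [hQ_def]
      have hbN : b ^ N = a ^ N * (1 + x) ^ N := by rw [hb_fact, mul_pow]
      have : x * b = ε + a ^ N := by
        rw [hb_def, mul_add, mul_comm x a, hax, hxε]
      rw [pow_succ, hbN, this]
      ring
    rw [hQb_eq]
    apply mul_nonneg (by positivity)
    -- need (1+x)^N * (1 - b) ≤ 1
    have key : (1 + x) ^ N * (1 - b) ≤ 1 := by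
      rcases le_or_gt (1 - b) 0 with h | h
      · have : (1 + x) ^ N * (1 - b) ≤ 0 :=
          mul_nonpos_of_nonneg_of_nonpos (by positivity) h
        linarith
      · have hstep1 : 1 - b ≤ 1 - (N:ℝ) * x := by
          have : (N:ℝ) * x ≤ b := le_trans hNx hab
          linarith
        have hbern : 1 - (N:ℝ) * x ≤ (1 - x) ^ N := by
          have := one_add_mul_le_pow (a := -x) (by linarith) N
          simpa [← sub_eq_add_neg] using this
        calc (1 + x) ^ N * (1 - b) ≤ (1 + x) ^ N * ((1 - x) ^ N) := by
              apply mul_le_mul_of_nonneg_left _ (by positivity)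
              linarith
          _ = (1 - x ^ 2) ^ N := by rw [← mul_pow]; congr 1; ring
          _ ≤ 1 := by
              apply pow_le_one₀ _ (by nlinarith)
              nlinarith
    linarith
  -- IVT
  have hQc : ContinuousOn Q (Icc a b) := by
    apply Continuous.continuousOn
    simp only [hQ_def]
    exact (((continuous_pow _).sub (continuous_pow _)).add
      (continuous_const.mul continuous_id)).sub continuous_const
  have h0mem : (0:ℝ) ∈ Icc (Q a) (Q b) := ⟨hQa, hQb⟩
  obtain ⟨u, huI, huQ⟩ := intermediate_value_Icc hab hQc h0mem
  have hu_pos : 0 < u := lt_of_lt_of_le ha_pos huI.1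
  refine ⟨Real.sqrt u, Real.sqrt_pos.mpr hu_pos, ?_, ?_, ?_⟩
  · rw [Real.sq_sqrt hu_pos.le]; exact huI.1
  · rw [Real.sq_sqrt hu_pos.le]; exact huI.2
  · rw [pow_mul, pow_mul, Real.sq_sqrt hu_pos.le]
    exact huQ
end

section
/- Let N ∈ ℕ, N ≥ 1. The polynomial X^N + X^{N-1} - 1 over ℂ has N distinct roots (it is squarefree). -/
open Polynomial

/-- The polynomial X^N + X^{N-1} - 1 over ℂ is squarefree and has N distinct roots. -/
theorem XN_plus_XNm1_sub_one_squarefree (N : ℕ) (hN : 1 ≤ N) :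
    Squarefree (X ^ N + X ^ (N - 1) - 1 : Polynomial ℂ) ∧
      (X ^ N + X ^ (N - 1) - 1 : Polynomial ℂ).roots.toFinset.card = N := by
  set P : Polynomial ℂ := X ^ N + X ^ (N - 1) - 1 with hP
  have hdeg : P.natDegree = N := by
    rw [hP]
    compute_degree!
    rw [if_neg (by omega), if_neg (by omega)]
    decide
  have hsep : P.Separable := by
    rw [Polynomial.separable_def]
    rw [Polynomial.isCoprime_iff_aeval_ne_zero_of_isAlgClosed (k := ℂ) ℂ P P.derivative]
    intro z
    by_contra h
    push_neg at h
    obtain ⟨h1, h2⟩ := h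
    simp only [coe_aeval_eq_eval] at h1 h2
    rcases N with _ | _ | M
    · omega
    · simp [hP] at h2
    · have hP' : P = X ^ (M + 2) + X ^ (M + 1) - 1 := by rw [hP]; norm_num
      have hz0 : z ≠ 0 := by
        rintro rfl
        rw [hP'] at h1
        simp at h1
      have hder : ((M : ℂ) + 2) * z ^ (M + 1) + ((M : ℂ) + 1) * z ^ M = 0 := by
        rw [hP'] at h2
        simp [derivative_X_pow] at h2
        linear_combination h2
      have hfac : z ^ M * (((M : ℂ) + 2) * z + ((M : ℂ) + 1)) = 0 := by
        ring_nf
        ring_nf at hder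
        linear_combination hder
      have hzval : ((M : ℂ) + 2) * z = -((M : ℂ) + 1) := by
        rcases mul_eq_zero.mp hfac with h | h
        · exact absurd h (pow_ne_zero M hz0)
        · linear_combination h
      -- z + 1 = 1/(M+2)
      have hM2 : ((M : ℂ) + 2) ≠ 0 := by
        intro h
        have := congrArg Complex.re h
        simp at this
        linarith [Nat.cast_nonneg (α := ℝ) M, this]
      have hz1 : z + 1 = 1 / ((M : ℂ) + 2) := by
        field_simp
        linear_combination hzval
      -- |z| ≤ 1
      have habsz : ‖z‖ ≤ 1 := by
        have : z = -((M : ℂ) + 1) / ((M : ℂ) + 2) := by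
          field_simp
          linear_combination hzval
        have e1 : ‖(-((M : ℂ) + 1))‖ = (M : ℝ) + 1 := by
          rw [norm_neg]
          rw [show ((M : ℂ) + 1) = ((M + 1 : ℕ) : ℂ) by push_cast; ring, Complex.norm_natCast]
          push_cast; ring
        have e2 : ‖((M : ℂ) + 2)‖ = (M : ℝ) + 2 := by
          rw [show ((M : ℂ) + 2) = ((M + 2 : ℕ) : ℂ) by push_cast; ring, Complex.norm_natCast]
          push_cast; ring
        rw [this, norm_div, e1, e2, div_le_one (by positivity)]
        linarith
      have habsz1 : ‖(z + 1)‖ < 1 := by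
        rw [hz1, norm_div, norm_one]
        rw [show ‖((M : ℂ) + 2)‖ = (M : ℝ) + 2 by
          rw [show ((M : ℂ) + 2) = ((M + 2 : ℕ) : ℂ) by push_cast; ring, Complex.norm_natCast]
          push_cast; ring]
        rw [div_lt_one (by positivity)]
        linarith
      -- z^(M+1)*(z+1) = 1
      have hkey : z ^ (M + 1) * (z + 1) = 1 := by
        rw [hP'] at h1
        simp at h1
        linear_combination h1
      have := congrArg (‖·‖) hkey
      rw [norm_mul, norm_pow, norm_one] at this
      have hle : ‖z‖ ^ (M + 1) * ‖(z + 1)‖ < 1 := by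
        calc ‖z‖ ^ (M + 1) * ‖(z + 1)‖
            ≤ 1 * ‖(z + 1)‖ := by
              apply mul_le_mul_of_nonneg_right _ (norm_nonneg _)
              exact pow_le_one₀ (norm_nonneg _) habsz
          _ < 1 := by rwa [one_mul]
      rw [this] at hle
      exact lt_irrefl 1 hle
  refine ⟨hsep.squarefree, ?_⟩
  rw [Multiset.toFinset_card_of_nodup (nodup_roots hsep), ← hdeg]
  exact (splits_iff_card_roots.mp (IsAlgClosed.splits P))
end

section
/- Let c_N be the unique positive real root of x^N + x^{N-1} - 1. Then N(1 - c_N) → ln 2 as N → ∞; equivalently, the first Dirichlet eigenvalue λ₁ = 1 - c_N of the absorbed walk on ℤ_N satisfies λ₁ ~ ln(2)/N. -/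
open Filter Real

/-- If c_N is the positive real root of x^N + x^{N-1} - 1 = 0, then
N(1 - c_N) → ln 2 as N → ∞, i.e. λ₁ = 1 - c_N ~ ln(2)/N. -/
theorem asymptotics_of_positive_root (c : ℕ → ℝ)
    (hc : ∀ N : ℕ, 2 ≤ N → 0 < c N ∧ (c N) ^ N + (c N) ^ (N - 1) = 1) :
    Filter.Tendsto (fun N : ℕ => (N : ℝ) * (1 - c N)) Filter.atTop
      (nhds (Real.log 2)) := by
  have hlt1 : ∀ N, 2 ≤ N → c N < 1 := by
    intro N hN
    by_contra h
    push_neg at h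
    have h1 : (1:ℝ) ≤ (c N)^(N-1) := one_le_pow₀ h
    have h2 : (1:ℝ) ≤ (c N)^N := one_le_pow₀ h
    nlinarith [(hc N hN).2]
  have hfac : ∀ N, 2 ≤ N → (c N)^(N-1) * (1 + c N) = 1 := by
    intro N hN
    have h1 : (c N)^N = (c N)^(N-1) * c N := by
      rw [← pow_succ]; congr 1; omega
    nlinarith [(hc N hN).2]
  -- lower bound
  have hlb : ∀ N, 2 ≤ N → (2:ℝ) ^ (-(1:ℝ)/((N-1:ℕ):ℝ)) < c N := by
    intro N hN
    set a : ℝ := (2:ℝ) ^ (-(1:ℝ)/((N-1:ℕ):ℝ)) with ha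
    by_contra h
    push_neg at h
    have hNpos : (0:ℝ) < ((N-1:ℕ):ℝ) := by
      have : 1 ≤ N - 1 := by omega
      exact_mod_cast Nat.lt_of_lt_of_le Nat.zero_lt_one this
    have hapow : a ^ (N-1) = 1/2 := by
      rw [ha, ← Real.rpow_natCast ((2:ℝ) ^ (-(1:ℝ)/((N-1:ℕ):ℝ))) (N-1),
        ← Real.rpow_mul (by norm_num)]
      rw [div_mul_cancel₀ _ (ne_of_gt hNpos)]
      norm_num [Real.rpow_neg_one]
    have hcle : (c N)^(N-1) ≤ a^(N-1) :=
      pow_le_pow_left₀ (le_of_lt (hc N hN).1) h _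
    have hgt : (1:ℝ)/2 < (c N)^(N-1) := by
      have h2 : 1 + c N < 2 := by linarith [hlt1 N hN]
      have h3 : 0 < 1 + c N := by linarith [(hc N hN).1]
      have hp := pow_pos (hc N hN).1 (N-1)
      nlinarith [hfac N hN]
    rw [hapow] at hcle
    linarith
  -- c N → 1
  have hlbtend : Tendsto (fun N : ℕ => (2:ℝ) ^ (-(1:ℝ)/((N-1:ℕ):ℝ))) atTop (nhds 1) := by
    have h0 : Tendsto (fun N : ℕ => (-(1:ℝ))/((N-1:ℕ):ℝ)) atTop (nhds 0) :=
      (tendsto_const_div_atTop_nhds_zero_nat (-1)).comp (tendsto_sub_atTop_nat 1)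
    have : Tendsto (fun x : ℝ => (2:ℝ) ^ x) (nhds 0) (nhds ((2:ℝ) ^ (0:ℝ))) :=
      (Real.continuousAt_const_rpow (by norm_num : (2:ℝ) ≠ 0)).tendsto
    simpa [Function.comp_def] using this.comp h0
  have hctend : Tendsto c atTop (nhds 1) := by
    apply tendsto_of_tendsto_of_tendsto_of_le_of_le' hlbtend tendsto_const_nhds
    · filter_upwards [eventually_ge_atTop 2] with N hN using le_of_lt (hlb N hN)
    · filter_upwards [eventually_ge_atTop 2] with N hN using le_of_lt (hlt1 N hN)
  -- slope limit: (c N - 1)/log (c N) → 1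
  have hslope : Tendsto (fun N => (c N - 1) / Real.log (c N)) atTop (nhds 1) := by
    have hd : HasDerivAt Real.log 1 1 := by
      simpa using Real.hasDerivAt_log one_ne_zero
    have h1 : Tendsto (slope Real.log 1) (nhdsWithin 1 {(1:ℝ)}ᶜ) (nhds 1) :=
      hasDerivAt_iff_tendsto_slope.mp hd
    have hcc : Tendsto c atTop (nhdsWithin 1 {(1:ℝ)}ᶜ) := by
      apply tendsto_nhdsWithin_of_tendsto_nhds_of_eventually_within _ hctend
      filter_upwards [eventually_ge_atTop 2] with N hN
      exact ne_of_lt (hlt1 N hN)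
    have h2 : Tendsto (fun N => slope Real.log 1 (c N)) atTop (nhds 1) := h1.comp hcc
    have h3 := h2.inv₀ one_ne_zero
    rw [inv_one] at h3
    apply h3.congr
    intro N
    simp [slope, Real.log_one]
    ring
  -- log (1 + c N) → log 2
  have hlog2 : Tendsto (fun N => Real.log (1 + c N)) atTop (nhds (Real.log 2)) := by
    have : Tendsto (fun N => 1 + c N) atTop (nhds 2) := by
      have := tendsto_const_nhds (x := (1:ℝ)) (f := atTop (α := ℕ)) |>.add hctend
      norm_num at this; exact this
    exact ((Real.continuousAt_log (by norm_num)).tendsto).comp this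
  -- N/(N-1) → 1
  have hratio : Tendsto (fun N : ℕ => (N:ℝ)/((N-1:ℕ):ℝ)) atTop (nhds 1) := by
    have h0 : Tendsto (fun N : ℕ => 1 + (1:ℝ)/((N-1:ℕ):ℝ)) atTop (nhds 1) := by
      have := (tendsto_const_div_atTop_nhds_zero_nat (1:ℝ)).comp (tendsto_sub_atTop_nat 1)
      have h := tendsto_const_nhds (x := (1:ℝ)) (f := atTop (α := ℕ)) |>.add this
      simpa [Function.comp_def] using h
    apply h0.congr'
    filter_upwards [eventually_ge_atTop 2] with N hN
    have hNpos : (0:ℝ) < ((N-1:ℕ):ℝ) := by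
      have : 1 ≤ N - 1 := by omega
      exact_mod_cast Nat.lt_of_lt_of_le Nat.zero_lt_one this
    have : ((N-1:ℕ):ℝ) = (N:ℝ) - 1 := by
      push_cast [Nat.cast_sub (by omega : 1 ≤ N)]; ring
    have h1 : (N:ℝ)-1 ≠ 0 := by linarith
    rw [this]
    field_simp
    ring
  -- combine
  have hmain : Tendsto (fun N : ℕ => ((N:ℝ)/((N-1:ℕ):ℝ)) * ((c N - 1)/Real.log (c N))
      * Real.log (1 + c N)) atTop (nhds (Real.log 2)) := by
    have := (hratio.mul hslope).mul hlog2
    simpa using this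
  apply hmain.congr'
  filter_upwards [eventually_ge_atTop 2] with N hN
  have hc0 := (hc N hN).1
  have hc1 := hlt1 N hN
  have hNpos : (0:ℝ) < ((N-1:ℕ):ℝ) := by
    have : 1 ≤ N - 1 := by omega
    exact_mod_cast Nat.lt_of_lt_of_le Nat.zero_lt_one this
  have hlogne : Real.log (c N) ≠ 0 := ne_of_lt (Real.log_neg hc0 hc1)
  have hlogid : Real.log (1 + c N) = -(((N-1:ℕ):ℝ) * Real.log (c N)) := by
    have h1 : Real.log ((c N)^(N-1) * (1 + c N)) = 0 := by
      rw [hfac N hN, Real.log_one]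
    rw [Real.log_mul (pow_ne_zero _ (ne_of_gt hc0)) (by linarith), Real.log_pow] at h1
    push_cast at h1 ⊢
    linarith
  have hcast : ((N-1:ℕ):ℝ) = (N:ℝ) - 1 := by
    push_cast [Nat.cast_sub (by omega : 1 ≤ N)]; ring
  have hN1 : (N:ℝ) - 1 ≠ 0 := by
    have : (2:ℝ) ≤ N := by exact_mod_cast hN
    linarith
  rw [hlogid, hcast]
  field_simp
  ring
end
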